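/- Let V be a real inner product space, t ≥ 1 a natural number, φ₁, …, φ_t ∈ V, v ∈ V, λ > 0, ε ≥ 0, and m ∈ ℝ^t a vector with |mᵢ| ≤ ε for every i. With K ∈ ℝ^{t×t} the Gram matrix K_{ij} = ⟪φᵢ, φⱼ⟫, k ∈ ℝ^t the vector kᵢ = ⟪φᵢ, v⟫, and σ² := ⟪v, v⟫ − kᵀ(K + λI)⁻¹k, it holds that |kᵀ(K + λI)⁻¹ m| ≤ (ε·√t/√λ)·√σ². -/

import Mathlib

open Matrix

/-- feature-space form of the mean-difference lemma (Lemma 3.1). -/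
theorem stmt_0 {V : Type*} [NormedAddCommGroup V] [InnerProductSpace ℝ V]
    (t : ℕ) (ht : 1 ≤ t) (φ : Fin t → V) (v : V) (lam ε : ℝ)
    (hlam : 0 < lam) (hε : 0 ≤ ε) (m : Fin t → ℝ) (hm : ∀ i, |m i| ≤ ε)
    (K : Matrix (Fin t) (Fin t) ℝ)
    (hK : K = Matrix.of fun i j => (inner ℝ (φ i) (φ j) : ℝ))
    (k : Fin t → ℝ) (hk : k = fun i => (inner ℝ (φ i) v : ℝ))
    (σsq : ℝ) (hσ : σsq = (inner ℝ v v : ℝ) - k ⬝ᵥ ((K + lam • 1)⁻¹ *ᵥ k)) :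
    |k ⬝ᵥ ((K + lam • 1)⁻¹ *ᵥ m)| ≤
      ε * Real.sqrt t / Real.sqrt lam * Real.sqrt σsq := by
  set A : Matrix (Fin t) (Fin t) ℝ := K + lam • 1 with hA
  -- quadratic form of K
  have quad : ∀ x y : Fin t → ℝ,
      x ⬝ᵥ (K *ᵥ y) = (inner ℝ (∑ i, x i • φ i) (∑ j, y j • φ j) : ℝ) := by
    intro x y
    rw [hK]
    simp only [dotProduct, mulVec, Matrix.of_apply, sum_inner, inner_sum,
      real_inner_smul_left, real_inner_smul_right, Finset.mul_sum]
    conv_rhs => rw [Finset.sum_comm]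
    refine Finset.sum_congr rfl fun i _ => Finset.sum_congr rfl fun j _ => by
      rw [real_inner_comm]; ring
  have hKsym : Kᵀ = K := by
    rw [hK]; ext i j
    simp [Matrix.transpose_apply, real_inner_comm]
  -- A is positive definite hence invertible
  have hApd : A.PosDef := by
    rw [Matrix.posDef_iff_dotProduct_mulVec]
    constructor
    · show Aᴴ = A
      have hct : Aᴴ = Aᵀ := by
        ext i j; simp [Matrix.conjTranspose_apply, Matrix.transpose_apply]
      rw [hct, hA, Matrix.transpose_add, hKsym, Matrix.transpose_smul,
        Matrix.transpose_one]
    · intro x hx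
      have h1 : star x ⬝ᵥ (A *ᵥ x) = x ⬝ᵥ (K *ᵥ x) + lam * (x ⬝ᵥ x) := by
        rw [hA, add_mulVec, smul_mulVec, one_mulVec, dotProduct_add,
          dotProduct_smul]
        simp [smul_eq_mul]
      rw [h1]
      have h2 : 0 ≤ x ⬝ᵥ (K *ᵥ x) := by
        rw [quad x x]; exact real_inner_self_nonneg
      have h3 : 0 < x ⬝ᵥ x := by
        have := Matrix.dotProduct_star_self_pos_iff (R := ℝ) (v := x) |>.mpr hx
        simpa using this
      positivity
  have hdet : IsUnit A.det := (Matrix.isUnit_iff_isUnit_det A).mp hApd.isUnit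
  set w : Fin t → ℝ := A⁻¹ *ᵥ k with hw
  have hAw : A *ᵥ w = k := by
    rw [hw, Matrix.mulVec_mulVec, Matrix.mul_nonsing_inv A hdet, Matrix.one_mulVec]
  have hKw : K *ᵥ w = k - lam • w := by
    have h : K *ᵥ w + lam • w = k := by
      have h' := hAw
      rwa [hA, add_mulVec, smul_mulVec, one_mulVec] at h'
    exact eq_sub_of_add_eq h
  -- symmetry of A⁻¹
  have hAinvsym : (A⁻¹)ᵀ = A⁻¹ := by
    have h1 : A⁻¹.IsHermitian := hApd.1.inv
    have h2 : (A⁻¹)ᴴ = A⁻¹ := h1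
    ext i j
    have h3 := congrFun (congrFun h2 i) j
    simp only [Matrix.conjTranspose_apply, star_trivial] at h3
    simp [Matrix.transpose_apply, h3]
  have hgoal_eq : k ⬝ᵥ (A⁻¹ *ᵥ m) = w ⬝ᵥ m := by
    rw [Matrix.dotProduct_mulVec, ← Matrix.mulVec_transpose, hAinvsym]
  -- key inequality: lam * ‖w‖² ≤ σsq
  set s : V := ∑ i, w i • φ i with hs
  have hss : (inner ℝ s s : ℝ) = w ⬝ᵥ k - lam * (w ⬝ᵥ w) := by
    rw [show (inner ℝ s s : ℝ) = w ⬝ᵥ (K *ᵥ w) from (quad w w).symm, hKw,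
      dotProduct_sub, dotProduct_smul]
    simp [smul_eq_mul]
  have hvs : (inner ℝ v s : ℝ) = w ⬝ᵥ k := by
    rw [hs]
    simp only [inner_sum, real_inner_smul_right]
    rw [hk, dotProduct]
    exact Finset.sum_congr rfl fun i _ => by rw [real_inner_comm]
  have h0 : 0 ≤ (inner ℝ (v - s) (v - s) : ℝ) := real_inner_self_nonneg
  rw [real_inner_sub_sub_self, hvs, hss] at h0
  have hσ' : σsq = (inner ℝ v v : ℝ) - w ⬝ᵥ k := by
    rw [hσ, dotProduct_comm]
  have key : lam * (w ⬝ᵥ w) ≤ σsq := by rw [hσ']; linarith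
  have hww : 0 ≤ w ⬝ᵥ w := Finset.sum_nonneg fun i _ => mul_self_nonneg _
  have hmm : 0 ≤ m ⬝ᵥ m := Finset.sum_nonneg fun i _ => mul_self_nonneg _
  have hσnn : 0 ≤ σsq := le_trans (mul_nonneg hlam.le hww) key
  have hw' : w ⬝ᵥ w ≤ σsq / lam := (le_div_iff₀ hlam).mpr (by linarith)
  have hm2 : m ⬝ᵥ m ≤ (t : ℝ) * ε ^ 2 := by
    rw [dotProduct]
    calc ∑ i, m i * m i ≤ ∑ _i : Fin t, ε ^ 2 := by
          refine Finset.sum_le_sum fun i _ => ?_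
          have := hm i
          have h' := abs_nonneg (m i)
          nlinarith [sq_abs (m i)]
      _ = (t : ℝ) * ε ^ 2 := by simp [Finset.sum_const, Finset.card_univ]
  have hcs : (w ⬝ᵥ m) ^ 2 ≤ (w ⬝ᵥ w) * (m ⬝ᵥ m) := by
    have := Finset.sum_mul_sq_le_sq_mul_sq Finset.univ w m
    simpa [dotProduct, pow_two] using this
  rw [hgoal_eq]
  calc |w ⬝ᵥ m| = Real.sqrt ((w ⬝ᵥ m) ^ 2) := (Real.sqrt_sq_eq_abs _).symm
    _ ≤ Real.sqrt ((σsq / lam) * ((t : ℝ) * ε ^ 2)) := by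
        refine Real.sqrt_le_sqrt (le_trans hcs ?_)
        exact mul_le_mul hw' hm2 hmm (div_nonneg hσnn hlam.le)
    _ = ε * Real.sqrt t / Real.sqrt lam * Real.sqrt σsq := by
        rw [Real.sqrt_mul (div_nonneg hσnn hlam.le),
          Real.sqrt_div hσnn, Real.sqrt_mul (Nat.cast_nonneg t), Real.sqrt_sq hε]
        ring
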